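/- Under the same hypotheses and definitions as in the previous identity (F Lipschitz convex, φ± monotone with γ(0+)=0, γ(∞)=∞, A± defined as above), the functions A₊ and A₋ are uniformly bounded on ℝ≥0, with ‖A±‖_∞ ≤ 3‖F'‖_∞. -/

import Mathlib

open MeasureTheory Set Filter
open scoped ENNReal

set_option linter.unusedVariables false
set_option linter.unnecessarySeqFocus false

namespace Stmt2Aux

/-- The set of "right-jump" points of a function antitone on `(0,∞)` is countable. -/
lemma countable_jumps {g : ℝ → ℝ} (hg : AntitoneOn g (Set.Ioi 0)) :
    Set.Countable {x ∈ Set.Ioi (0:ℝ) | sSup (g '' Set.Ioi x) < g x} := by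
  set D := {x ∈ Set.Ioi (0:ℝ) | sSup (g '' Set.Ioi x) < g x} with hD
  have hchoice : ∀ x ∈ D, ∃ q : ℚ, sSup (g '' Set.Ioi x) < (q:ℝ) ∧ (q:ℝ) < g x := by
    intro x hx; exact exists_rat_btwn hx.2
  choose! q hq1 hq2 using hchoice
  have hbdd : ∀ x : ℝ, 0 < x → BddAbove (g '' Set.Ioi x) := by
    intro x hx
    refine ⟨g x, ?_⟩
    rintro _ ⟨w, hw, rfl⟩
    exact hg hx (hx.trans hw) (le_of_lt hw)
  have hkey : ∀ x ∈ D, ∀ y ∈ D, x < y → (q y : ℝ) < (q x : ℝ) := by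
    intro x hx y hy hxy
    have h1 : g y ≤ sSup (g '' Set.Ioi x) :=
      le_csSup (hbdd x hx.1) (Set.mem_image_of_mem _ hxy)
    calc (q y : ℝ) < g y := hq2 y hy
      _ ≤ sSup (g '' Set.Ioi x) := h1
      _ < (q x : ℝ) := hq1 x hx
  have hinj : Set.InjOn q D := by
    intro x hx y hy hxy
    by_contra hne
    rcases lt_or_gt_of_ne hne with h | h
    · exact absurd (congrArg (fun r : ℚ => (r:ℝ)) hxy)
        (ne_of_gt (hkey x hx y hy h))
    · exact absurd (congrArg (fun r : ℚ => (r:ℝ)) hxy)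
        (ne_of_lt (hkey y hy x hx h))
  exact Set.countable_of_injective_of_countable_image hinj (Set.to_countable _)

lemma f_integrableOn (Γ : ℝ → ℝ) (hΓmono : Monotone Γ)
    (g : ℝ → ℝ) (hgint : ∀ l : ℝ, 0 ≤ l → IntervalIntegrable g volume 0 l)
    (φ : ℝ → ℝ) (hφpos : ∀ z ∈ Set.Ioi (0:ℝ), 0 < φ z)
    (hφle : ∀ z ∈ Set.Ioi (0:ℝ), 1/φ z ≤ g z)
    (hφanti : AntitoneOn (fun z => 1/φ z) (Set.Ioi 0))
    (t : ℝ) (ht : 0 < t) :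
    IntegrableOn (fun z => Real.exp (Γ z) * (1 / φ z)) (Set.Ioc 0 t) := by
  have hg' : IntegrableOn g (Set.Ioc 0 t) :=
    (intervalIntegrable_iff_integrableOn_Ioc_of_le ht.le).1 (hgint t ht.le)
  have hdom : IntegrableOn (fun z => Real.exp (Γ t) * g z) (Set.Ioc 0 t) := hg'.const_mul _
  refine Integrable.mono' hdom ?_ ?_
  · exact ((Real.measurable_exp.comp hΓmono.measurable).aemeasurable.mul
      ((aemeasurable_restrict_of_antitoneOn measurableSet_Ioi hφanti).mono_measure
        (Measure.restrict_mono Set.Ioc_subset_Ioi_self le_rfl))).aestronglyMeasurable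
  · filter_upwards [ae_restrict_mem measurableSet_Ioc] with z hz
    have hz0 : (0:ℝ) < z := hz.1
    have h1 : 0 ≤ 1/φ z := le_of_lt (one_div_pos.2 (hφpos z hz0))
    rw [Real.norm_eq_abs, abs_of_nonneg (mul_nonneg (Real.exp_pos _).le h1)]
    exact mul_le_mul (Real.exp_le_exp.2 (hΓmono hz.2)) (hφle z hz0) h1 (Real.exp_pos _).le

lemma ftc_bound (Γ : ℝ → ℝ) (hΓmono : Monotone Γ) (hΓnn : ∀ x : ℝ, 0 ≤ Γ x)
    (g : ℝ → ℝ) (hganti : AntitoneOn g (Set.Ioi 0)) (hgnn : ∀ x ∈ Set.Ioi (0:ℝ), 0 ≤ g x)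
    (hgint : ∀ l : ℝ, 0 ≤ l → IntervalIntegrable g volume 0 l)
    (hΓg : ∀ x y : ℝ, 0 < x → x ≤ y → Γ y - Γ x = (1/2) * ∫ z in x..y, g z)
    (φ : ℝ → ℝ) (hφpos : ∀ z ∈ Set.Ioi (0:ℝ), 0 < φ z)
    (hφle : ∀ z ∈ Set.Ioi (0:ℝ), 1/φ z ≤ g z)
    (hφanti : AntitoneOn (fun z => 1/φ z) (Set.Ioi 0))
    (t : ℝ) (ht : 0 < t) :
    ∫ z in Set.Ioc (0:ℝ) t, Real.exp (Γ z) * (1 / φ z) ≤ 2 * (Real.exp (Γ t) - 1) := by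
  have hgab : ∀ a b : ℝ, 0 < a → a ≤ b → IntervalIntegrable g volume a b := fun a b ha hab =>
    ((hgint a ha.le).symm.trans (hgint b (ha.le.trans hab)))
  set gp : ℝ → ℝ := fun x => sSup (g '' Set.Ioi x) with hgp
  have hbdd : ∀ x : ℝ, 0 < x → BddAbove (g '' Set.Ioi x) := by
    intro x hx
    refine ⟨g x, ?_⟩
    rintro _ ⟨w, hw, rfl⟩
    exact hganti hx (hx.trans hw) (le_of_lt hw)
  have hne : ∀ x : ℝ, (g '' Set.Ioi x).Nonempty :=
    fun x => ⟨g (x+1), Set.mem_image_of_mem _ (lt_add_one x)⟩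
  have hgp_le : ∀ x : ℝ, 0 < x → gp x ≤ g x := by
    intro x hx
    refine csSup_le (hne x) ?_
    rintro _ ⟨w, hw, rfl⟩
    exact hganti hx (hx.trans hw) (le_of_lt hw)
  have hle_gp : ∀ x : ℝ, 0 < x → ∀ w, x < w → g w ≤ gp x :=
    fun x hx w hw => le_csSup (hbdd x hx) (Set.mem_image_of_mem _ hw)
  have hgp_nn : ∀ x : ℝ, 0 < x → 0 ≤ gp x := fun x hx =>
    (hgnn (x+1) (by simp; linarith)).trans (hle_gp x hx (x+1) (lt_add_one x))
  have hgp_anti : AntitoneOn gp (Set.Ioi 0) := fun a ha b hb hab =>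
    csSup_le_csSup (hbdd a ha) (hne b) (Set.image_mono (Set.Ioi_subset_Ioi hab))
  have hgp_tendsto : ∀ x : ℝ, 0 < x → Tendsto g (nhdsWithin x (Set.Ioi x)) (nhds (gp x)) :=
    fun x hx => (hganti.mono (Set.Ioi_subset_Ioi hx.le)).tendsto_nhdsGT (hbdd x hx)
  have hΓderiv : ∀ x : ℝ, 0 < x → HasDerivWithinAt Γ (gp x / 2) (Set.Ioi x) x := by
    intro x hx
    rw [hasDerivWithinAt_iff_tendsto_slope]
    have hdiff : Set.Ioi x \ {x} = Set.Ioi x := Set.diff_singleton_eq_self (by simp)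
    rw [hdiff]
    have key : ∀ y ∈ Set.Ioi x, g y / 2 ≤ slope Γ x y ∧ slope Γ x y ≤ gp x / 2 := by
      intro y hy
      have hxy : x < y := hy
      have hΓd := hΓg x y hx hxy.le
      have hgi : IntegrableOn g (Set.Ioc x y) :=
        (intervalIntegrable_iff_integrableOn_Ioc_of_le hxy.le).1 (hgab x y hx hxy.le)
      have hconst : IntegrableOn (fun _ : ℝ => gp x) (Set.Ioc x y) := integrableOn_const
        (by rw [Real.volume_Ioc]; exact ENNReal.ofReal_ne_top)
      have hconst' : IntegrableOn (fun _ : ℝ => g y) (Set.Ioc x y) := integrableOn_const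
        (by rw [Real.volume_Ioc]; exact ENNReal.ofReal_ne_top)
      have hvol : ∫ _ in Set.Ioc x y, (1:ℝ) = y - x := by
        simp [Real.volume_Ioc, ENNReal.toReal_ofReal (sub_nonneg.2 hxy.le), hxy.le]
      have hup : ∫ z in x..y, g z ≤ (y - x) * gp x := by
        rw [intervalIntegral.integral_of_le hxy.le]
        calc ∫ z in Set.Ioc x y, g z ≤ ∫ _ in Set.Ioc x y, gp x :=
              setIntegral_mono_on hgi hconst measurableSet_Ioc
                (fun z hz => hle_gp x hx z hz.1)
          _ = (y - x) * gp x := by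
              simp [Real.volume_Ioc, ENNReal.toReal_ofReal (sub_nonneg.2 hxy.le), smul_eq_mul, hxy.le]
      have hlo : (y - x) * g y ≤ ∫ z in x..y, g z := by
        rw [intervalIntegral.integral_of_le hxy.le]
        calc (y - x) * g y = ∫ _ in Set.Ioc x y, g y := by
              simp [Real.volume_Ioc, ENNReal.toReal_ofReal (sub_nonneg.2 hxy.le), smul_eq_mul, hxy.le]
          _ ≤ ∫ z in Set.Ioc x y, g z :=
              setIntegral_mono_on hconst' hgi measurableSet_Ioc
                (fun z hz => hganti (hx.trans hz.1) (hx.trans hxy) hz.2)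
      have hyx : (0:ℝ) < y - x := sub_pos.2 hxy
      constructor
      · rw [slope_def_field, hΓd, le_div_iff₀ hyx]
        linarith
      · rw [slope_def_field, hΓd, div_le_iff₀ hyx]
        linarith
    refine tendsto_of_tendsto_of_tendsto_of_le_of_le'
      ((hgp_tendsto x hx).div_const 2) tendsto_const_nhds ?_ ?_
    · filter_upwards [self_mem_nhdsWithin] with y hy using (key y hy).1
    · filter_upwards [self_mem_nhdsWithin] with y hy using (key y hy).2
  have hΓcont : ∀ ε : ℝ, 0 < ε → ε ≤ t → ContinuousOn Γ (Set.Icc ε t) := by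
    intro ε hε hεt
    have hIg : IntegrableOn g (Set.uIcc ε t) := by
      rw [Set.uIcc_of_le hεt]
      exact (intervalIntegrable_iff_integrableOn_Icc_of_le hεt).1 (hgab ε t hε hεt)
    have h1 : ContinuousOn (fun x => ∫ z in ε..x, g z) (Set.Icc ε t) := by
      have := intervalIntegral.continuousOn_primitive_interval (a := ε) (b := t) hIg
      rwa [Set.uIcc_of_le hεt] at this
    have h2 : ContinuousOn (fun x => Γ ε + (1/2) * ∫ z in ε..x, g z) (Set.Icc ε t) :=
      continuousOn_const.add (continuousOn_const.mul h1)
    refine ContinuousOn.congr h2 ?_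
    intro x hx
    have := hΓg ε x hε hx.1
    simp only
    linarith
  have hstep : ∀ ε : ℝ, 0 < ε → ε ≤ t →
      ∫ z in Set.Ioc ε t, Real.exp (Γ z) * (1/φ z)
        ≤ 2 * Real.exp (Γ t) - 2 * Real.exp (Γ ε) := by
    intro ε hε hεt
    set U : ℝ → ℝ := fun x => Real.exp (Γ x) * gp x with hU
    have hgIcc : IntegrableOn g (Set.Icc ε t) :=
      (intervalIntegrable_iff_integrableOn_Icc_of_le hεt).1 (hgab ε t hε hεt)
    have hsub : Set.Icc ε t ⊆ Set.Ioi 0 := fun z hz => lt_of_lt_of_le hε hz.1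
    have hUint : IntegrableOn U (Set.Icc ε t) := by
      refine Integrable.mono' (hgIcc.const_mul (Real.exp (Γ t))) ?_ ?_
      · exact ((Real.measurable_exp.comp hΓmono.measurable).aemeasurable.mul
          (aemeasurable_restrict_of_antitoneOn measurableSet_Icc
            (hgp_anti.mono hsub))).aestronglyMeasurable
      · filter_upwards [ae_restrict_mem measurableSet_Icc] with z hz
        have hz0 : 0 < z := lt_of_lt_of_le hε hz.1
        rw [Real.norm_eq_abs, abs_of_nonneg (mul_nonneg (Real.exp_pos _).le (hgp_nn z hz0))]
        exact mul_le_mul (Real.exp_le_exp.2 (hΓmono hz.2)) (hgp_le z hz0) (hgp_nn z hz0)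
          (Real.exp_pos _).le
    have hftc : ∫ x in ε..t, U x = 2 * Real.exp (Γ t) - 2 * Real.exp (Γ ε) := by
      have h := intervalIntegral.integral_eq_sub_of_hasDeriv_right_of_le hεt
        (f := fun x => 2 * Real.exp (Γ x)) (f' := U)
        (continuousOn_const.mul (Real.continuous_exp.comp_continuousOn (hΓcont ε hε hεt)))
        (fun x hx => by
          have hx0 : 0 < x := hε.trans hx.1
          have h1 : HasDerivWithinAt (fun y => Real.exp (Γ y))
              (Real.exp (Γ x) * (gp x / 2)) (Set.Ioi x) x :=
            (Real.hasDerivAt_exp (Γ x)).comp_hasDerivWithinAt x (hΓderiv x hx0)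
          have h2 := h1.const_mul (2:ℝ)
          refine h2.congr_deriv ?_
          show 2 * (Real.exp (Γ x) * (gp x / 2)) = Real.exp (Γ x) * gp x
          ring)
        ((intervalIntegrable_iff_integrableOn_Icc_of_le hεt).2 hUint)
      rw [h]
    have hD0 : volume {x ∈ Set.Ioi (0:ℝ) | sSup (g '' Set.Ioi x) < g x} = 0 :=
      (countable_jumps hganti).measure_zero _
    have hcomp : ∫ z in Set.Ioc ε t, Real.exp (Γ z) * (1/φ z) ≤ ∫ z in Set.Ioc ε t, U z := by
      apply setIntegral_mono_ae_restrict
      · exact (f_integrableOn Γ hΓmono g hgint φ hφpos hφle hφanti t ht).mono_set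
          (fun z hz => ⟨hε.trans hz.1, hz.2⟩)
      · exact hUint.mono_set Set.Ioc_subset_Icc_self
      · have h1 : ∀ᵐ z ∂(volume.restrict (Set.Ioc ε t)),
            z ∉ {x ∈ Set.Ioi (0:ℝ) | sSup (g '' Set.Ioi x) < g x} :=
          ae_restrict_of_ae ((ae_iff.2 (by simpa using hD0)))
        filter_upwards [h1, ae_restrict_mem measurableSet_Ioc] with z hzD hz
        have hz0 : 0 < z := hε.trans hz.1
        have hgle : g z ≤ gp z := by
          by_contra hlt
          exact hzD ⟨hz0, lt_of_not_ge hlt⟩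
        exact mul_le_mul_of_nonneg_left ((hφle z hz0).trans hgle) (Real.exp_pos _).le
    calc ∫ z in Set.Ioc ε t, Real.exp (Γ z) * (1/φ z) ≤ ∫ z in Set.Ioc ε t, U z := hcomp
      _ = ∫ x in ε..t, U x := (intervalIntegral.integral_of_le hεt).symm
      _ = 2 * Real.exp (Γ t) - 2 * Real.exp (Γ ε) := hftc
  -- now let ε → 0 along the sequence t/(n+1)
  set s : ℕ → Set ℝ := fun n => Set.Ioc (t / (n+1)) t with hs
  have hsm : ∀ n, MeasurableSet (s n) := fun n => measurableSet_Ioc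
  have hmono : Monotone s := by
    intro n m hnm
    apply Set.Ioc_subset_Ioc_left
    apply div_le_div_of_nonneg_left ht.le (by positivity)
    exact_mod_cast by exact_mod_cast add_le_add_left (Nat.cast_le.2 hnm) 1
  have hunion : (⋃ n, s n) = Set.Ioc 0 t := by
    ext x
    simp only [hs, Set.mem_iUnion, Set.mem_Ioc]
    constructor
    · rintro ⟨n, h1, h2⟩
      exact ⟨lt_trans (by positivity) h1, h2⟩
    · rintro ⟨hx0, hxt⟩
      obtain ⟨n, hn⟩ := exists_nat_gt (t / x)
      refine ⟨n, ?_, hxt⟩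
      rw [div_lt_iff₀ (by positivity)]
      have h2 : t < (↑n) * x := by
        have := (div_lt_iff₀ hx0).1 hn
        linarith
      nlinarith
  have hint : IntegrableOn (fun z => Real.exp (Γ z) * (1/φ z)) (⋃ n, s n) := by
    rw [hunion]
    exact f_integrableOn Γ hΓmono g hgint φ hφpos hφle hφanti t ht
  have htend := tendsto_setIntegral_of_monotone hsm hmono hint
  rw [hunion] at htend
  refine le_of_tendsto htend (Filter.Eventually.of_forall fun n => ?_)
  have hεpos : 0 < t / (n+1) := by positivity
  have hεt : t / (n+1) ≤ t := by
    rw [div_le_iff₀ (by positivity)]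
    nlinarith [ht.le, (Nat.cast_nonneg n : (0:ℝ) ≤ n)]
  refine (hstep _ hεpos hεt).trans ?_
  have h1 : (1:ℝ) ≤ Real.exp (Γ (t/(n+1))) := by
    rw [show (1:ℝ) = Real.exp 0 by simp]
    exact Real.exp_le_exp.2 (hΓnn _)
  linarith

lemma key_bound (μ : Measure ℝ) (hμfin : μ (Set.Ioi 0) ≠ ⊤)
    (Γ : ℝ → ℝ) (hΓmono : Monotone Γ) (hΓnn : ∀ x : ℝ, 0 ≤ Γ x)
    (g : ℝ → ℝ) (hganti : AntitoneOn g (Set.Ioi 0)) (hgnn : ∀ x ∈ Set.Ioi (0:ℝ), 0 ≤ g x)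
    (hgint : ∀ l : ℝ, 0 ≤ l → IntervalIntegrable g volume 0 l)
    (hΓg : ∀ x y : ℝ, 0 < x → x ≤ y → Γ y - Γ x = (1/2) * ∫ z in x..y, g z)
    (φ : ℝ → ℝ) (hφpos : ∀ z ∈ Set.Ioi (0:ℝ), 0 < φ z)
    (hφle : ∀ z ∈ Set.Ioi (0:ℝ), 1/φ z ≤ g z)
    (hφanti : AntitoneOn (fun z => 1/φ z) (Set.Ioi 0))
    (l : ℝ) (hl : 0 < l) :
    ∫ z in (0:ℝ)..l, (Real.exp (Γ z) * (1 / φ z)) * (∫ m in Set.Ioi z, Real.exp (-Γ m) ∂μ)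
      ≤ 2 * ((μ (Set.Ioi 0)).toReal - ∫ m in Set.Ioi (0:ℝ), Real.exp (-Γ m) ∂μ) := by
  haveI hfin : IsFiniteMeasure (μ.restrict (Set.Ioi (0:ℝ))) :=
    ⟨by rw [Measure.restrict_apply_univ]; exact Ne.lt_top hμfin⟩
  set E : ℝ → ℝ≥0∞ := fun m => ENNReal.ofReal (Real.exp (-Γ m)) with hE
  have hexpGmeas : Measurable (fun m : ℝ => Real.exp (-Γ m)) :=
    Real.measurable_exp.comp hΓmono.measurable.neg
  have hEmeas : Measurable E := ENNReal.measurable_ofReal.comp hexpGmeas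
  have hE1 : ∀ m, E m ≤ 1 := by
    intro m
    calc E m ≤ ENNReal.ofReal 1 :=
          ENNReal.ofReal_le_ofReal (Real.exp_le_one_iff.2 (neg_nonpos.2 (hΓnn m)))
      _ = 1 := ENNReal.ofReal_one
  set Blin : ℝ → ℝ≥0∞ := fun z => ∫⁻ m in Set.Ioi z, E m ∂μ with hBlin
  have hBlin_anti : Antitone Blin := fun a b hab =>
    lintegral_mono' (Measure.restrict_mono (Set.Ioi_subset_Ioi hab) le_rfl) le_rfl
  have hBlin_meas : Measurable Blin := hBlin_anti.measurable
  have hBlin_le : ∀ z : ℝ, 0 ≤ z → Blin z ≤ μ (Set.Ioi 0) := by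
    intro z hz
    calc Blin z ≤ ∫⁻ _ in Set.Ioi z, 1 ∂μ := lintegral_mono fun m => hE1 m
      _ = μ (Set.Ioi z) := by simp
      _ ≤ μ (Set.Ioi 0) := measure_mono (Set.Ioi_subset_Ioi hz)
  have hBlin_ne : ∀ z : ℝ, 0 ≤ z → Blin z ≠ ⊤ := fun z hz =>
    ne_top_of_le_ne_top hμfin (hBlin_le z hz)
  set B : ℝ → ℝ := fun z => ∫ m in Set.Ioi z, Real.exp (-Γ m) ∂μ with hB
  have hB_eq : ∀ z : ℝ, B z = (Blin z).toReal := by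
    intro z
    rw [hB]
    exact integral_eq_lintegral_of_nonneg_ae
      (Filter.Eventually.of_forall fun m => (Real.exp_pos _).le)
      hexpGmeas.aestronglyMeasurable
  have hB_nn : ∀ z, 0 ≤ B z := fun z => by rw [hB_eq z]; exact ENNReal.toReal_nonneg
  have hB_meas : Measurable B := by
    have : B = fun z => (Blin z).toReal := funext hB_eq
    rw [this]
    exact hBlin_meas.ennreal_toReal
  set f : ℝ → ℝ := fun z => Real.exp (Γ z) * (1 / φ z) with hf
  have hf_nn : ∀ z ∈ Set.Ioi (0:ℝ), 0 ≤ f z := fun z hz =>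
    mul_nonneg (Real.exp_pos _).le (le_of_lt (one_div_pos.2 (hφpos z hz)))
  have hf_int : ∀ t : ℝ, 0 < t → IntegrableOn f (Set.Ioc 0 t) := fun t ht =>
    f_integrableOn Γ hΓmono g hgint φ hφpos hφle hφanti t ht
  have hf_aem : AEMeasurable f (volume.restrict (Set.Ioc 0 l)) :=
    (hf_int l hl).aestronglyMeasurable.aemeasurable
  -- Step 1 : convert to a lintegral
  have h1 : ∫ z in (0:ℝ)..l, f z * B z
      = (∫⁻ z in Set.Ioc 0 l, ENNReal.ofReal (f z) * Blin z).toReal := by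
    rw [intervalIntegral.integral_of_le hl.le,
      integral_eq_lintegral_of_nonneg_ae (f := fun z => f z * B z)
        (by filter_upwards [ae_restrict_mem measurableSet_Ioc] with z hz
            exact mul_nonneg (hf_nn z hz.1) (hB_nn z))
        ((hf_aem.mul hB_meas.aemeasurable).aestronglyMeasurable)]
    congr 1
    refine lintegral_congr_ae ?_
    filter_upwards [ae_restrict_mem measurableSet_Ioc] with z hz
    rw [ENNReal.ofReal_mul (hf_nn z hz.1), hB_eq, ENNReal.ofReal_toReal (hBlin_ne z hz.1.le)]
  set F2 : ℝ → ℝ → ℝ≥0∞ := fun z m => ENNReal.ofReal (f z) * (Set.Ioi z).indicator E m with hF2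
  -- Step 2 : pointwise rewrite of Blin
  have h2 : ∀ z : ℝ, 0 < z →
      ENNReal.ofReal (f z) * Blin z = ∫⁻ m in Set.Ioi (0:ℝ), F2 z m ∂μ := by
    intro z hz
    rw [hF2]
    simp only
    rw [lintegral_const_mul' _ _ ENNReal.ofReal_ne_top]
    congr 1
    rw [lintegral_indicator measurableSet_Ioi,
      Measure.restrict_restrict measurableSet_Ioi,
      Set.inter_eq_left.2 (Set.Ioi_subset_Ioi hz.le)]
  have h5 : (∫⁻ z in Set.Ioc 0 l, ENNReal.ofReal (f z) * Blin z)
      = ∫⁻ z in Set.Ioc 0 l, ∫⁻ m in Set.Ioi (0:ℝ), F2 z m ∂μ := by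
    refine lintegral_congr_ae ?_
    filter_upwards [ae_restrict_mem measurableSet_Ioc] with z hz
    exact h2 z hz.1
  -- Step 3 : Tonelli
  have hk_meas : AEMeasurable (Function.uncurry F2)
      ((volume.restrict (Set.Ioc 0 l)).prod (μ.restrict (Set.Ioi 0))) := by
    have h3 : (fun p : ℝ × ℝ => (Set.Ioi p.1).indicator E p.2)
        = fun p : ℝ × ℝ => ({q : ℝ × ℝ | q.1 < q.2}.indicator (fun q => E q.2) p) := by
      ext p
      by_cases hp : p.1 < p.2
      · simp [Set.indicator_of_mem, hp, Set.mem_Ioi]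
      · simp [Set.indicator_of_notMem, hp, Set.mem_Ioi]
    have h4 : Measurable fun p : ℝ × ℝ => (Set.Ioi p.1).indicator E p.2 := by
      rw [h3]
      exact (hEmeas.comp measurable_snd).indicator
        (measurableSet_lt measurable_fst measurable_snd)
    exact (ENNReal.measurable_ofReal.comp_aemeasurable hf_aem.comp_fst).mul h4.aemeasurable
  have hswap := lintegral_lintegral_swap hk_meas
  -- Step 4 : bound the inner integral, for fixed m
  have h6 : ∀ m : ℝ, 0 < m →
      (∫⁻ z in Set.Ioc 0 l, F2 z m) ≤ ENNReal.ofReal (2 * (1 - Real.exp (-Γ m))) := by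
    intro m hm
    set t := min l m with htdef
    have ht : 0 < t := lt_min hl hm
    have h7 : ∀ z : ℝ, F2 z m
        = (Set.Iio m).indicator (fun z => ENNReal.ofReal (f z) * E m) z := by
      intro z
      by_cases hzm : z < m
      · simp [hF2, Set.indicator_of_mem, hzm, Set.mem_Ioi, Set.mem_Iio]
      · simp [hF2, Set.indicator_of_notMem, hzm, Set.mem_Ioi, Set.mem_Iio]
    have hEm_ne : E m ≠ ⊤ := ne_top_of_le_ne_top ENNReal.one_ne_top (hE1 m)
    have hfnn_ae : (0:ℝ → ℝ) ≤ᵐ[volume.restrict (Set.Ioc 0 t)] f := by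
      filter_upwards [ae_restrict_mem measurableSet_Ioc] with z hz using hf_nn z hz.1
    have hexp1 : (1:ℝ) ≤ Real.exp (Γ t) := by
      rw [show (1:ℝ) = Real.exp 0 by simp]
      exact Real.exp_le_exp.2 (hΓnn t)
    calc ∫⁻ z in Set.Ioc 0 l, F2 z m
        = ∫⁻ z in Set.Ioc 0 l,
            (Set.Iio m).indicator (fun z => ENNReal.ofReal (f z) * E m) z :=
          lintegral_congr fun z => h7 z
      _ = ∫⁻ z in Set.Iio m ∩ Set.Ioc 0 l, ENNReal.ofReal (f z) * E m := by
          rw [lintegral_indicator measurableSet_Iio,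
            Measure.restrict_restrict measurableSet_Iio]
      _ ≤ ∫⁻ z in Set.Ioc 0 t, ENNReal.ofReal (f z) * E m := by
          refine lintegral_mono_set ?_
          rintro z ⟨hzm, hz0, hzl⟩
          exact ⟨hz0, le_min hzl (le_of_lt hzm)⟩
      _ = (∫⁻ z in Set.Ioc 0 t, ENNReal.ofReal (f z)) * E m :=
          lintegral_mul_const' _ _ hEm_ne
      _ ≤ ENNReal.ofReal (2 * (Real.exp (Γ t) - 1)) * E m := by
          refine mul_le_mul_left ?_ _
          rw [← ofReal_integral_eq_lintegral_ofReal (hf_int t ht) hfnn_ae]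
          exact ENNReal.ofReal_le_ofReal
            (ftc_bound Γ hΓmono hΓnn g hganti hgnn hgint hΓg φ hφpos hφle hφanti t ht)
      _ ≤ ENNReal.ofReal (2 * (1 - Real.exp (-Γ m))) := by
          rw [hE]
          simp only
          rw [← ENNReal.ofReal_mul (by nlinarith)]
          apply ENNReal.ofReal_le_ofReal
          have hΓtm : Γ t ≤ Γ m := hΓmono (min_le_right _ _)
          have he : Real.exp (Γ t) * Real.exp (-Γ m) = Real.exp (Γ t - Γ m) := by
            rw [← Real.exp_add]; ring_nf
          have he2 : Real.exp (Γ t - Γ m) ≤ 1 := Real.exp_le_one_iff.2 (by linarith)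
          nlinarith [Real.exp_pos (-Γ m)]
  -- Step 5 : the outer integral
  have hbint : Integrable (fun m : ℝ => 2 * (1 - Real.exp (-Γ m)))
      (μ.restrict (Set.Ioi 0)) := by
    refine Integrable.mono' (integrable_const (2:ℝ)) ?_ ?_
    · exact ((measurable_const.sub hexpGmeas).const_mul 2).aestronglyMeasurable
    · refine Filter.Eventually.of_forall fun m => ?_
      have h9 : Real.exp (-Γ m) ≤ 1 := Real.exp_le_one_iff.2 (neg_nonpos.2 (hΓnn m))
      have h10 := (Real.exp_pos (-Γ m)).le
      rw [Real.norm_eq_abs, abs_of_nonneg (by nlinarith)]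
      nlinarith
  have h8 : ∫⁻ m in Set.Ioi (0:ℝ), ENNReal.ofReal (2 * (1 - Real.exp (-Γ m))) ∂μ
      = ENNReal.ofReal (∫ m in Set.Ioi (0:ℝ), 2 * (1 - Real.exp (-Γ m)) ∂μ) := by
    rw [ofReal_integral_eq_lintegral_ofReal hbint]
    refine Filter.Eventually.of_forall fun m => ?_
    have h9 : Real.exp (-Γ m) ≤ 1 := Real.exp_le_one_iff.2 (neg_nonpos.2 (hΓnn m))
    show (0:ℝ) ≤ 2 * (1 - Real.exp (-Γ m))
    nlinarith
  -- Step 6 : assemble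
  have hle : (∫⁻ z in Set.Ioc 0 l, ENNReal.ofReal (f z) * Blin z)
      ≤ ENNReal.ofReal (∫ m in Set.Ioi (0:ℝ), 2 * (1 - Real.exp (-Γ m)) ∂μ) := by
    rw [h5, hswap, ← h8]
    refine lintegral_mono_ae ?_
    filter_upwards [ae_restrict_mem measurableSet_Ioi] with m hm using h6 m hm
  have hIone : ∫ m in Set.Ioi (0:ℝ), (1:ℝ) ∂μ = (μ (Set.Ioi 0)).toReal := by
    rw [setIntegral_const]
    simp [Measure.real]
  have hIexp : Integrable (fun m : ℝ => Real.exp (-Γ m)) (μ.restrict (Set.Ioi 0)) := by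
    refine Integrable.mono' (integrable_const (1:ℝ)) hexpGmeas.aestronglyMeasurable ?_
    refine Filter.Eventually.of_forall fun m => ?_
    rw [Real.norm_eq_abs, abs_of_nonneg (Real.exp_pos _).le]
    exact Real.exp_le_one_iff.2 (neg_nonpos.2 (hΓnn m))
  have hval : ∫ m in Set.Ioi (0:ℝ), 2 * (1 - Real.exp (-Γ m)) ∂μ
      = 2 * ((μ (Set.Ioi 0)).toReal - B 0) := by
    rw [integral_const_mul, integral_sub (integrable_const (1:ℝ)) hIexp, hIone, hB]
  calc ∫ z in (0:ℝ)..l, f z * B z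
      = (∫⁻ z in Set.Ioc 0 l, ENNReal.ofReal (f z) * Blin z).toReal := h1
    _ ≤ (ENNReal.ofReal (∫ m in Set.Ioi (0:ℝ), 2 * (1 - Real.exp (-Γ m)) ∂μ)).toReal :=
        ENNReal.toReal_mono ENNReal.ofReal_ne_top hle
    _ = ∫ m in Set.Ioi (0:ℝ), 2 * (1 - Real.exp (-Γ m)) ∂μ := by
        refine ENNReal.toReal_ofReal (integral_nonneg fun m => ?_)
        have h9 : Real.exp (-Γ m) ≤ 1 := Real.exp_le_one_iff.2 (neg_nonpos.2 (hΓnn m))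
        show (0:ℝ) ≤ 2 * (1 - Real.exp (-Γ m))
        nlinarith
    _ = 2 * ((μ (Set.Ioi 0)).toReal - B 0) := hval

end Stmt2Aux

/-- The functions `A₊, A₋` are uniformly bounded by `3‖F'‖_∞`. -/
theorem stmt2 (F : ℝ → ℝ) (F' : StieltjesFunction ℝ)
    (K : NNReal) (hLip : LipschitzWith K F)
    (hconv : ConvexOn ℝ (Set.Ici 0) F)
    (hF' : ∀ x : ℝ, 0 ≤ x → HasDerivWithinAt F (F' x) (Set.Ioi x) x)
    (M : ℝ) (hM : ∀ l : ℝ, 0 ≤ l → |F' l| ≤ M)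
    (φp φm : ℝ → ℝ)
    (hφp_pos : ∀ l : ℝ, 0 < l → 0 < φp l)
    (hφm_neg : ∀ l : ℝ, 0 < l → φm l < 0)
    (hφp_mono : MonotoneOn φp (Set.Ioi 0))
    (hφm_anti : AntitoneOn φm (Set.Ioi 0))
    (γ : ℝ → ℝ)
    (hγ : ∀ l : ℝ, 0 < l → γ l = (1/2) * ∫ m in (0:ℝ)..l, (1 / φp m - 1 / φm m))
    (hγ0 : Tendsto γ (nhdsWithin 0 (Set.Ioi 0)) (nhds 0))
    (hγtop : Tendsto γ atTop atTop)
    (Ap Am : ℝ → ℝ)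
    (hAp0 : Ap 0 = F' 0 + ∫ m in Set.Ioi (0:ℝ), Real.exp (-γ m) ∂F'.measure)
    (hAm0 : Am 0 = -(F' 0) - ∫ m in Set.Ioi (0:ℝ), Real.exp (-γ m) ∂F'.measure)
    (hAp : ∀ l : ℝ, 0 ≤ l → Ap l = Ap 0 + ∫ z in (0:ℝ)..l,
        (Real.exp (γ z) / φp z) * (∫ m in Set.Ioi z, Real.exp (-γ m) ∂F'.measure))
    (hAm : ∀ l : ℝ, 0 ≤ l → Am l = Am 0 + ∫ z in (0:ℝ)..l,
        (Real.exp (γ z) / φm z) * (∫ m in Set.Ioi z, Real.exp (-γ m) ∂F'.measure)) :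
    ∀ l : ℝ, 0 ≤ l → |Ap l| ≤ 3 * M ∧ |Am l| ≤ 3 * M := by
  intro l hl
  have hM0 : 0 ≤ M := le_trans (abs_nonneg _) (hM 0 le_rfl)
  have hF0 : |F' 0| ≤ M := hM 0 le_rfl
  have hF0le : F' 0 ≤ M := (le_abs_self _).trans hF0
  have hF0ge : -M ≤ F' 0 := neg_le_of_abs_le hF0
  -- measurable global versions
  set g : ℝ → ℝ := fun z => if 0 < z then 1 / φp z - 1 / φm z else 0 with hgdef
  have hgval : ∀ z ∈ Set.Ioi (0:ℝ), g z = 1/φp z - 1/φm z := fun z hz => by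
    simp only [hgdef, if_pos (Set.mem_Ioi.1 hz)]
  have hgnn : ∀ z ∈ Set.Ioi (0:ℝ), 0 ≤ g z := by
    intro z hz
    rw [hgval z hz]
    have h1 : 0 ≤ 1/φp z := (one_div_pos.2 (hφp_pos z hz)).le
    have h2 : 1/φm z ≤ 0 := (one_div_neg.2 (hφm_neg z hz)).le
    linarith
  have hganti : AntitoneOn g (Set.Ioi 0) := by
    intro a ha b hb hab
    rw [hgval a ha, hgval b hb]
    have h1 : 1/φp b ≤ 1/φp a := one_div_le_one_div_of_le (hφp_pos a ha) (hφp_mono ha hb hab)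
    have h2 : 1/φm a ≤ 1/φm b :=
      one_div_le_one_div_of_neg_of_le (hφm_neg a ha) (hφm_anti ha hb hab)
    linarith
  -- interval integrability of g
  obtain ⟨l₀, hl₀, hγl₀⟩ : ∃ x : ℝ, 0 < x ∧ 0 < γ x := by
    obtain ⟨x, hx1, hx2⟩ := ((hγtop.eventually_ge_atTop 1).and (eventually_ge_atTop (1:ℝ))).exists
    exact ⟨x, lt_of_lt_of_le one_pos hx2, lt_of_lt_of_le one_pos hx1⟩
  have hgint : ∀ t : ℝ, 0 ≤ t → IntervalIntegrable g volume 0 t := by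
    have hbase : IntervalIntegrable (fun m => 1/φp m - 1/φm m) volume 0 l₀ := by
      by_contra hc
      rw [hγ l₀ hl₀, intervalIntegral.integral_undef hc, mul_zero] at hγl₀
      exact lt_irrefl 0 hγl₀
    have hgl₀ : IntervalIntegrable g volume 0 l₀ := by
      rw [intervalIntegrable_iff] at hbase ⊢
      refine hbase.congr ?_
      rw [Set.uIoc_of_le hl₀.le]
      filter_upwards [ae_restrict_mem measurableSet_Ioc] with z hz
      exact (hgval z hz.1).symm
    intro t ht
    rcases le_total t l₀ with h | h
    · refine hgl₀.mono_set ?_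
      rw [Set.uIcc_of_le ht, Set.uIcc_of_le hl₀.le]
      exact Set.Icc_subset_Icc le_rfl h
    · refine hgl₀.trans ?_
      apply AntitoneOn.intervalIntegrable
      rw [Set.uIcc_of_le h]
      exact hganti.mono (fun z hz => lt_of_lt_of_le hl₀ hz.1)
  -- γ in terms of g
  have hγg : ∀ t : ℝ, 0 < t → γ t = (1/2) * ∫ z in (0:ℝ)..t, g z := by
    intro t ht
    rw [hγ t ht]
    congr 1
    refine intervalIntegral.integral_congr_ae ?_
    refine Filter.Eventually.of_forall fun z hz => ?_
    rw [Set.uIoc_of_le ht.le] at hz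
    exact (hgval z hz.1).symm
  have hγdiff : ∀ a b : ℝ, 0 < a → a ≤ b → γ b - γ a = (1/2) * ∫ z in a..b, g z := by
    intro a b ha hab
    rw [hγg a ha, hγg b (lt_of_lt_of_le ha hab), ← mul_sub]
    congr 1
    exact intervalIntegral.integral_interval_sub_left (hgint b (ha.le.trans hab)) (hgint a ha.le)
  have hγmono : ∀ a b : ℝ, 0 < a → a ≤ b → γ a ≤ γ b := by
    intro a b ha hab
    have h1 := hγdiff a b ha hab
    have h2 : 0 ≤ ∫ z in a..b, g z :=
      intervalIntegral.integral_nonneg hab (fun u hu => hgnn u (lt_of_lt_of_le ha hu.1))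
    linarith
  have hγnn : ∀ x : ℝ, 0 < x → 0 ≤ γ x := by
    intro x hx
    refine le_of_tendsto hγ0 ?_
    filter_upwards [Ioo_mem_nhdsGT hx] with ε hε
    exact hγmono ε x hε.1 hε.2.le
  -- the monotone measurable version of γ
  set Γ : ℝ → ℝ := fun x => if 0 < x then γ x else 0 with hΓdef
  have hΓval : ∀ x : ℝ, 0 < x → Γ x = γ x := fun x hx => by simp only [hΓdef, if_pos hx]
  have hΓnn : ∀ x : ℝ, 0 ≤ Γ x := by
    intro x
    by_cases hx : 0 < x
    · rw [hΓval x hx]; exact hγnn x hx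
    · simp [hΓdef, if_neg hx]
  have hΓmono : Monotone Γ := by
    intro a b hab
    by_cases ha : 0 < a
    · rw [hΓval a ha, hΓval b (lt_of_lt_of_le ha hab)]; exact hγmono a b ha hab
    · by_cases hb : 0 < b
      · rw [hΓval b hb]
        simp only [hΓdef, if_neg ha]
        exact hγnn b hb
      · simp [hΓdef, if_neg ha, if_neg hb]
  have hΓg : ∀ x y : ℝ, 0 < x → x ≤ y → Γ y - Γ x = (1/2) * ∫ z in x..y, g z := by
    intro x y hx hxy
    rw [hΓval x hx, hΓval y (lt_of_lt_of_le hx hxy)]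
    exact hγdiff x y hx hxy
  -- measure facts
  set μ := F'.measure with hμdef
  have hμIoi : μ (Set.Ioi 0) ≤ ENNReal.ofReal (M - F' 0) := by
    have hcover : Set.Ioi (0:ℝ) = ⋃ n : ℕ, Set.Ioc (0:ℝ) (n:ℝ) := by
      ext x
      simp only [Set.mem_Ioi, Set.mem_iUnion, Set.mem_Ioc]
      constructor
      · intro hx
        obtain ⟨n, hn⟩ := exists_nat_ge x
        exact ⟨n, hx, hn⟩
      · rintro ⟨n, hn, _⟩; exact hn
    have hdir : Directed (· ⊆ ·) (fun n : ℕ => Set.Ioc (0:ℝ) (n:ℝ)) := by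
      intro i j
      exact ⟨max i j,
        Set.Ioc_subset_Ioc_right (by exact_mod_cast le_max_left i j),
        Set.Ioc_subset_Ioc_right (by exact_mod_cast le_max_right i j)⟩
    rw [hcover, hdir.measure_iUnion]
    refine iSup_le fun n => ?_
    rw [hμdef, StieltjesFunction.measure_Ioc]
    refine ENNReal.ofReal_le_ofReal ?_
    have h2 : F' (n:ℝ) ≤ M := (le_abs_self _).trans (hM n (Nat.cast_nonneg n))
    linarith
  have hμfin : μ (Set.Ioi 0) ≠ ⊤ := ne_top_of_le_ne_top ENNReal.ofReal_ne_top hμIoi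
  have hμreal : (μ (Set.Ioi 0)).toReal ≤ M - F' 0 := by
    refine le_trans (ENNReal.toReal_mono ENNReal.ofReal_ne_top hμIoi) ?_
    rw [ENNReal.toReal_ofReal (by linarith)]
  haveI : IsFiniteMeasure (μ.restrict (Set.Ioi (0:ℝ))) :=
    ⟨by rw [Measure.restrict_apply_univ]; exact hμfin.lt_top⟩
  have hΓmeas : Measurable Γ := hΓmono.measurable
  have hexpmeas : Measurable (fun m : ℝ => Real.exp (-Γ m)) :=
    Real.measurable_exp.comp hΓmeas.neg
  have hBγ : ∀ z : ℝ, 0 ≤ z → (∫ m in Set.Ioi z, Real.exp (-γ m) ∂μ)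
      = ∫ m in Set.Ioi z, Real.exp (-Γ m) ∂μ := by
    intro z hz
    refine setIntegral_congr_fun measurableSet_Ioi fun m hm => ?_
    rw [hΓval m (lt_of_le_of_lt hz hm)]
  have hB0nn : 0 ≤ ∫ m in Set.Ioi (0:ℝ), Real.exp (-Γ m) ∂μ :=
    setIntegral_nonneg measurableSet_Ioi fun m _ => (Real.exp_pos _).le
  have hB0le : (∫ m in Set.Ioi (0:ℝ), Real.exp (-Γ m) ∂μ) ≤ (μ (Set.Ioi 0)).toReal := by
    have hint : IntegrableOn (fun m : ℝ => Real.exp (-Γ m)) (Set.Ioi 0) μ := by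
      refine Integrable.mono' (integrable_const 1) hexpmeas.aestronglyMeasurable ?_
      refine Filter.Eventually.of_forall fun m => ?_
      rw [Real.norm_eq_abs, abs_of_nonneg (Real.exp_pos _).le]
      exact Real.exp_le_one_iff.2 (neg_nonpos.2 (hΓnn m))
    calc (∫ m in Set.Ioi (0:ℝ), Real.exp (-Γ m) ∂μ) ≤ ∫ _ in Set.Ioi (0:ℝ), (1:ℝ) ∂μ :=
        setIntegral_mono_on hint (integrable_const 1) measurableSet_Ioi
          (fun m _ => Real.exp_le_one_iff.2 (neg_nonpos.2 (hΓnn m)))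
      _ = (μ (Set.Ioi 0)).toReal := by rw [setIntegral_const]; simp [Measure.real]
  -- hypotheses for φp and -φm
  have hφp_pos' : ∀ z ∈ Set.Ioi (0:ℝ), 0 < φp z := fun z hz => hφp_pos z hz
  have hφp_le : ∀ z ∈ Set.Ioi (0:ℝ), 1/φp z ≤ g z := by
    intro z hz
    rw [hgval z hz]
    have h2 : 1/φm z ≤ 0 := (one_div_neg.2 (hφm_neg z hz)).le
    linarith
  have hφp_anti : AntitoneOn (fun z => 1/φp z) (Set.Ioi 0) := fun a ha b hb hab =>
    one_div_le_one_div_of_le (hφp_pos a ha) (hφp_mono ha hb hab)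
  have hφm_pos' : ∀ z ∈ Set.Ioi (0:ℝ), 0 < -φm z := fun z hz => neg_pos.2 (hφm_neg z hz)
  have hφm_le : ∀ z ∈ Set.Ioi (0:ℝ), 1/(-φm z) ≤ g z := by
    intro z hz
    rw [hgval z hz, one_div_neg_eq_neg_one_div]
    have h1 : 0 ≤ 1/φp z := (one_div_pos.2 (hφp_pos z hz)).le
    linarith
  have hφm_anti' : AntitoneOn (fun z => 1/(-φm z)) (Set.Ioi 0) := by
    intro a ha b hb hab
    refine one_div_le_one_div_of_le (hφm_pos' a ha) ?_
    have := hφm_anti ha hb hab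
    linarith
  rcases eq_or_lt_of_le hl with hl0 | hl0
  · -- l = 0
    rw [← hl0]
    constructor
    · rw [hAp0, hBγ 0 le_rfl, abs_le]
      constructor <;> linarith
    · rw [hAm0, hBγ 0 le_rfl, abs_le]
      constructor <;> linarith
  · -- l > 0
    have hkeyp := Stmt2Aux.key_bound μ hμfin Γ hΓmono hΓnn g hganti hgnn hgint hΓg
      φp hφp_pos' hφp_le hφp_anti l hl0
    have hkeym := Stmt2Aux.key_bound μ hμfin Γ hΓmono hΓnn g hganti hgnn hgint hΓg
      (fun z => -φm z) hφm_pos' hφm_le hφm_anti' l hl0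
    beta_reduce at hkeym
    have hinner : ∀ z ∈ Set.Ioc (0:ℝ) l, (∫ m in Set.Ioi z, Real.exp (-γ m) ∂μ)
        = ∫ m in Set.Ioi z, Real.exp (-Γ m) ∂μ := fun z hz => hBγ z hz.1.le
    have hTp : (∫ z in (0:ℝ)..l, (Real.exp (γ z) / φp z)
          * (∫ m in Set.Ioi z, Real.exp (-γ m) ∂μ))
        = ∫ z in (0:ℝ)..l, (Real.exp (Γ z) * (1/φp z))
          * (∫ m in Set.Ioi z, Real.exp (-Γ m) ∂μ) := by
      refine intervalIntegral.integral_congr_ae (Filter.Eventually.of_forall fun z hz => ?_)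
      rw [Set.uIoc_of_le hl0.le] at hz
      rw [hinner z hz, hΓval z hz.1, div_eq_mul_one_div]
    have hTm : (∫ z in (0:ℝ)..l, (Real.exp (γ z) / φm z)
          * (∫ m in Set.Ioi z, Real.exp (-γ m) ∂μ))
        = - ∫ z in (0:ℝ)..l, (Real.exp (Γ z) * (1/(-φm z)))
          * (∫ m in Set.Ioi z, Real.exp (-Γ m) ∂μ) := by
      rw [← intervalIntegral.integral_neg]
      refine intervalIntegral.integral_congr_ae (Filter.Eventually.of_forall fun z hz => ?_)
      rw [Set.uIoc_of_le hl0.le] at hz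
      rw [hinner z hz, hΓval z hz.1]
      have hφmne : φm z ≠ 0 := ne_of_lt (hφm_neg z hz.1)
      field_simp
    have hInn : ∀ z : ℝ, 0 ≤ ∫ m in Set.Ioi z, Real.exp (-Γ m) ∂μ := fun z =>
      setIntegral_nonneg measurableSet_Ioi fun m _ => (Real.exp_pos _).le
    have hTpnn : 0 ≤ ∫ z in (0:ℝ)..l, (Real.exp (Γ z) * (1/φp z))
        * (∫ m in Set.Ioi z, Real.exp (-Γ m) ∂μ) := by
      rw [intervalIntegral.integral_of_le hl0.le]
      refine setIntegral_nonneg measurableSet_Ioc fun z hz => ?_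
      exact mul_nonneg (mul_nonneg (Real.exp_pos _).le
        (one_div_pos.2 (hφp_pos z hz.1)).le) (hInn z)
    have hTmnn : 0 ≤ ∫ z in (0:ℝ)..l, (Real.exp (Γ z) * (1/(-φm z)))
        * (∫ m in Set.Ioi z, Real.exp (-Γ m) ∂μ) := by
      rw [intervalIntegral.integral_of_le hl0.le]
      refine setIntegral_nonneg measurableSet_Ioc fun z hz => ?_
      exact mul_nonneg (mul_nonneg (Real.exp_pos _).le
        (one_div_pos.2 (neg_pos.2 (hφm_neg z hz.1))).le) (hInn z)
    constructor
    · rw [hAp l hl, hAp0, hBγ 0 le_rfl, hTp, abs_le]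
      constructor
      · linarith
      · linarith
    · rw [hAm l hl, hAm0, hBγ 0 le_rfl, hTm, abs_le]
      constructor
      · linarith
      · linarith
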